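/- arXiv:2206.13612 — 2 statements merged into one kernel-verified Lean document; each statement's English description precedes it below -/
import Mathlib

section
/- If v_1, ..., v_d are linearly independent vectors in ℝ^d and S = {v_j + v_k : 1 ≤ j ≤ k ≤ d}, then the only real symmetric d×d matrix A satisfying xᵀAx = 0 for all x ∈ S is the zero matrix. -/
/-- If `v 1, …, v d` are linearly independent vectors in `ℝ^d` and
`S = {v j + v k : j ≤ k}`, then the only real symmetric `d × d` matrix `A`
with `xᵀ A x = 0` for all `x ∈ S` is the zero matrix. -/
theorem sm_uniqueness_of_linearIndependent {d : ℕ}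
    (v : Fin d → (Fin d → ℝ)) (hv : LinearIndependent ℝ v)
    (A : Matrix (Fin d) (Fin d) ℝ) (hA : A.IsSymm)
    (h : ∀ j k : Fin d, j ≤ k →
      dotProduct (v j + v k) (A.mulVec (v j + v k)) = 0) :
    A = 0 := by
  have hsym : ∀ x y : Fin d → ℝ,
      dotProduct x (A.mulVec y) = dotProduct y (A.mulVec x) := by
    intro x y
    rw [Matrix.dotProduct_mulVec, ← Matrix.mulVec_transpose, hA.eq, dotProduct_comm]
  have hdiag : ∀ j, dotProduct (v j) (A.mulVec (v j)) = 0 := by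
    intro j
    have hj := h j j le_rfl
    simp only [Matrix.mulVec_add, dotProduct_add, add_dotProduct] at hj
    linarith
  have hB : ∀ j k : Fin d, dotProduct (v j) (A.mulVec (v k)) = 0 := by
    have key : ∀ j k : Fin d, j ≤ k →
        dotProduct (v j) (A.mulVec (v k)) = 0 := by
      intro j k hjk
      have hj := h j k hjk
      simp only [Matrix.mulVec_add, dotProduct_add, add_dotProduct] at hj
      have hs := hsym (v k) (v j)
      have d1 := hdiag j
      have d2 := hdiag k
      linarith
    intro j k
    rcases le_total j k with hjk | hkj
    · exact key j k hjk
    · rw [hsym]; exact key k j hkj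
  have hspan : Submodule.span ℝ (Set.range v) = ⊤ :=
    hv.span_eq_top_of_card_eq_finrank' (by simp)
  have hmem : ∀ x : Fin d → ℝ, x ∈ Submodule.span ℝ (Set.range v) := by
    intro x; rw [hspan]; trivial
  have hx : ∀ (x : Fin d → ℝ) (k : Fin d),
      dotProduct x (A.mulVec (v k)) = 0 := by
    intro x k
    induction hmem x using Submodule.span_induction with
    | mem y hy =>
      obtain ⟨j, rfl⟩ := hy
      exact hB j k
    | zero => simp
    | add y z _ _ hy hz => rw [add_dotProduct, hy, hz, add_zero]
    | smul c y _ hy => rw [smul_dotProduct, hy, smul_zero]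
  have hz : ∀ k, A.mulVec (v k) = 0 := fun k =>
    dotProduct_self_eq_zero.mp (hx (A.mulVec (v k)) k)
  have hall : ∀ x : Fin d → ℝ, A.mulVec x = 0 := by
    intro x
    induction hmem x using Submodule.span_induction with
    | mem y hy =>
      obtain ⟨j, rfl⟩ := hy
      exact hz j
    | zero => simp
    | add y z _ _ hy hz => rw [Matrix.mulVec_add, hy, hz, add_zero]
    | smul c y _ hy => rw [Matrix.mulVec_smul, hy, smul_zero]
  ext i j
  have := congrFun (hall (Pi.single j 1)) i
  simpa [Matrix.mulVec_single] using this
end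

section
/- Let P, Q be elliptical distributions on ℝ^d with characteristic functions φ_P(ξ) = e^{iμ₁·ξ} ψ₁(ξᵀΣ₁ξ) and φ_Q(ξ) = e^{iμ₂·ξ} ψ₂(ξᵀΣ₂ξ). If the projections of P and Q onto the line spanned by x agree for every x in some spanning set of ℝ^d, then μ₁ = μ₂. -/
open MeasureTheory

/-- The characteristic function of a measure on `ℝ^d`. -/
noncomputable def cf {d : ℕ} (P : Measure (EuclideanSpace ℝ (Fin d)))
    (ξ : EuclideanSpace ℝ (Fin d)) : ℂ :=
  ∫ x, Complex.exp (((inner ℝ x ξ : ℝ) : ℂ) * Complex.I) ∂P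

/-- The quadratic form `ξᵀ M ξ`. -/
noncomputable def qf {d : ℕ} (M : Matrix (Fin d) (Fin d) ℝ)
    (ξ : EuclideanSpace ℝ (Fin d)) : ℝ :=
  dotProduct (fun i => ξ i) (M.mulVec (fun i => ξ i))

/-- `P` is an elliptical distribution with location `μ`, scatter matrix `Sig`
and generator `ψ`. -/
def IsElliptical {d : ℕ} (P : Measure (EuclideanSpace ℝ (Fin d)))
    (μ : EuclideanSpace ℝ (Fin d)) (Sig : Matrix (Fin d) (Fin d) ℝ) (ψ : ℝ → ℂ) : Prop :=
  IsProbabilityMeasure P ∧ Sig.PosSemidef ∧ ContinuousOn ψ (Set.Ici 0) ∧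
    ∀ ξ, cf P ξ = Complex.exp (((inner ℝ μ ξ : ℝ) : ℂ) * Complex.I) * ψ (qf Sig ξ)

/-- The projection of `P` onto the line spanned by `x`: the pushforward of `P`
under the orthogonal projection onto `span {x}`. -/
noncomputable def projLine {d : ℕ} (P : Measure (EuclideanSpace ℝ (Fin d)))
    (x : EuclideanSpace ℝ (Fin d)) :
    Measure (Submodule.span ℝ ({x} : Set (EuclideanSpace ℝ (Fin d)))) :=
  P.map (Submodule.orthogonalProjectionOnto (Submodule.span ℝ {x}))

/-! ### Auxiliary lemmas -/

lemma qf_smul {d : ℕ} (M : Matrix (Fin d) (Fin d) ℝ) (t : ℝ) (x : EuclideanSpace ℝ (Fin d)) :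
    qf M (t • x) = t ^ 2 * qf M x := by
  unfold qf
  have h : (fun i => (t • x) i) = t • (fun i => x i) := by
    funext i; simp
  rw [h, Matrix.mulVec_smul, dotProduct_smul, smul_dotProduct]
  simp [smul_eq_mul]; ring

lemma qf_zero {d : ℕ} (M : Matrix (Fin d) (Fin d) ℝ) : qf M 0 = 0 := by
  unfold qf
  have h : (fun i => (0 : EuclideanSpace ℝ (Fin d)) i) = (0 : Fin d → ℝ) := by funext i; simp
  rw [h]; simp

lemma qf_nonneg {d : ℕ} {M : Matrix (Fin d) (Fin d) ℝ} (hM : M.PosSemidef)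
    (x : EuclideanSpace ℝ (Fin d)) : 0 ≤ qf M x := by
  have := hM.dotProduct_mulVec_nonneg (fun i => x i)
  simpa [qf] using this

lemma cf_eq_proj {d : ℕ} (P : Measure (EuclideanSpace ℝ (Fin d)))
    (x ξ : EuclideanSpace ℝ (Fin d)) (hξ : ξ ∈ Submodule.span ℝ ({x} : Set _)) :
    cf P ξ = ∫ z : Submodule.span ℝ ({x} : Set (EuclideanSpace ℝ (Fin d))),
      Complex.exp (((inner ℝ (z : EuclideanSpace ℝ (Fin d)) ξ : ℝ) : ℂ) * Complex.I)
        ∂(projLine P x) := by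
  rw [projLine, integral_map]
  · unfold cf
    congr 1; funext y
    have h0 : (inner ℝ (y - (Submodule.orthogonalProjectionOnto (Submodule.span ℝ ({x} : Set _)) y :
        EuclideanSpace ℝ (Fin d))) ξ : ℝ) = 0 :=
      Submodule.starProjection_inner_eq_zero y ξ hξ
    rw [inner_sub_left] at h0
    have : (inner ℝ ((Submodule.orthogonalProjectionOnto (Submodule.span ℝ ({x} : Set _)) y :
        EuclideanSpace ℝ (Fin d))) ξ : ℝ) = inner ℝ y ξ := by linarith
    rw [this]
  · exact (Submodule.orthogonalProjectionOnto _).continuous.measurable.aemeasurable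
  · apply Continuous.aestronglyMeasurable
    exact Complex.continuous_exp.comp ((Complex.continuous_ofReal.comp
      ((continuous_subtype_val.inner continuous_const))).mul continuous_const)

lemma cf_eq_of_proj {d : ℕ} (P Q : Measure (EuclideanSpace ℝ (Fin d)))
    (x ξ : EuclideanSpace ℝ (Fin d)) (hξ : ξ ∈ Submodule.span ℝ ({x} : Set _))
    (h : projLine P x = projLine Q x) : cf P ξ = cf Q ξ := by
  rw [cf_eq_proj P x ξ hξ, cf_eq_proj Q x ξ hξ, h]

lemma exp_one_small {x : ℝ} (h : Complex.exp ((x : ℂ) * Complex.I) = 1)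
    (h0 : x ≠ 0) (h2 : |x| < 2 * Real.pi) : False := by
  rw [Complex.exp_eq_one_iff] at h
  obtain ⟨n, hn⟩ := h
  have hI : (Complex.I : ℂ) ≠ 0 := Complex.I_ne_zero
  have hx : (x : ℂ) = n * (2 * Real.pi) := by
    have : (x : ℂ) * Complex.I = (n * (2 * Real.pi)) * Complex.I := by
      rw [hn]; ring
    exact mul_right_cancel₀ hI this
  have hx' : x = n * (2 * Real.pi) := by exact_mod_cast hx
  rcases eq_or_ne n 0 with rfl | hn0
  · simp at hx'; exact h0 hx'
  · have h1 : (1 : ℝ) ≤ |(n : ℝ)| := by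
      exact_mod_cast Int.one_le_abs (by exact_mod_cast hn0)
    have hpi : (0 : ℝ) < 2 * Real.pi := by positivity
    have : 2 * Real.pi ≤ |x| := by
      rw [hx', abs_mul, abs_of_pos hpi]
      nlinarith
    linarith

lemma expI_mul (x y : ℝ) :
    Complex.exp ((x : ℂ) * Complex.I) * Complex.exp ((y : ℂ) * Complex.I)
      = Complex.exp (((x + y : ℝ) : ℂ) * Complex.I) := by
  rw [← Complex.exp_add]; push_cast; ring_nf

/-- Core scalar lemma. -/
lemma scalar_core {a b c₁ c₂ : ℝ} {ψ₁ ψ₂ : ℝ → ℂ}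
    (hceq : ∀ t : ℝ, Complex.exp (((t * a : ℝ) : ℂ) * Complex.I) * ψ₁ (t ^ 2 * c₁)
      = Complex.exp (((t * b : ℝ) : ℂ) * Complex.I) * ψ₂ (t ^ 2 * c₂))
    (hp : ∀ᶠ t in nhds (0 : ℝ), ψ₁ (t ^ 2 * c₁) ≠ 0) : a = b := by
  by_contra hab
  have hc : a - b ≠ 0 := sub_ne_zero.mpr hab
  obtain ⟨δ, hδ, hball⟩ := Metric.eventually_nhds_iff.mp hp
  set t : ℝ := min δ (Real.pi / |a - b|) / 2 with ht
  have hpi : (0 : ℝ) < Real.pi := Real.pi_pos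
  have habs : (0 : ℝ) < |a - b| := abs_pos.mpr hc
  have htpos : 0 < t := by positivity
  have htδ : t < δ := by
    have : t ≤ δ / 2 := by
      apply div_le_div_of_nonneg_right (min_le_left _ _) ?_ |>.trans_eq rfl
      · norm_num
    linarith
  have hpne : ψ₁ (t ^ 2 * c₁) ≠ 0 := by
    apply hball
    simpa [Real.dist_eq, abs_of_pos htpos] using htδ
  -- the two equations
  have e1 := hceq t
  have e2 := hceq (-t)
  rw [show ((-t) ^ 2 : ℝ) = t ^ 2 by ring] at e2
  set p := ψ₁ (t ^ 2 * c₁) with hpdef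
  set q := ψ₂ (t ^ 2 * c₂) with hqdef
  -- p ^ 2 = q ^ 2
  have hpq : p ^ 2 = q ^ 2 := by
    have := congrArg₂ (· * ·) e1 e2
    have hlhs : Complex.exp (((t * a : ℝ) : ℂ) * Complex.I) * p *
        (Complex.exp (((-t * a : ℝ) : ℂ) * Complex.I) * p) = p ^ 2 := by
      have h1 : Complex.exp (((t * a : ℝ) : ℂ) * Complex.I) *
          Complex.exp (((-t * a : ℝ) : ℂ) * Complex.I) = 1 := by
        rw [expI_mul]; norm_num
      calc Complex.exp (((t * a : ℝ) : ℂ) * Complex.I) * p *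
          (Complex.exp (((-t * a : ℝ) : ℂ) * Complex.I) * p)
          = (Complex.exp (((t * a : ℝ) : ℂ) * Complex.I) *
            Complex.exp (((-t * a : ℝ) : ℂ) * Complex.I)) * p ^ 2 := by ring
        _ = p ^ 2 := by rw [h1, one_mul]
    have hrhs : Complex.exp (((t * b : ℝ) : ℂ) * Complex.I) * q *
        (Complex.exp (((-t * b : ℝ) : ℂ) * Complex.I) * q) = q ^ 2 := by
      have h1 : Complex.exp (((t * b : ℝ) : ℂ) * Complex.I) *
          Complex.exp (((-t * b : ℝ) : ℂ) * Complex.I) = 1 := by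
        rw [expI_mul]; norm_num
      calc Complex.exp (((t * b : ℝ) : ℂ) * Complex.I) * q *
          (Complex.exp (((-t * b : ℝ) : ℂ) * Complex.I) * q)
          = (Complex.exp (((t * b : ℝ) : ℂ) * Complex.I) *
            Complex.exp (((-t * b : ℝ) : ℂ) * Complex.I)) * q ^ 2 := by ring
        _ = q ^ 2 := by rw [h1, one_mul]
    rw [hlhs, hrhs] at this
    exact this
  -- square of e1, replacing q^2 by p^2
  have hsq : Complex.exp (((t * a : ℝ) : ℂ) * Complex.I) ^ 2 * p ^ 2
      = Complex.exp (((t * b : ℝ) : ℂ) * Complex.I) ^ 2 * p ^ 2 := by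
    have := congrArg (· ^ 2) e1
    simp only [mul_pow] at this
    rw [this, hpq]
  have hp2 : p ^ 2 ≠ 0 := pow_ne_zero _ hpne
  have hexp2 : Complex.exp (((t * a : ℝ) : ℂ) * Complex.I) ^ 2
      = Complex.exp (((t * b : ℝ) : ℂ) * Complex.I) ^ 2 :=
    mul_right_cancel₀ hp2 hsq
  -- hence exp(2 t (a-b) I) = 1
  have hone : Complex.exp (((2 * t * (a - b) : ℝ) : ℂ) * Complex.I) = 1 := by
    have h1 : Complex.exp (((t * a : ℝ) : ℂ) * Complex.I) ^ 2
        = Complex.exp (((2 * (t * a) : ℝ) : ℂ) * Complex.I) := by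
      rw [sq, expI_mul]; norm_num; ring_nf
    have h2 : Complex.exp (((t * b : ℝ) : ℂ) * Complex.I) ^ 2
        = Complex.exp (((2 * (t * b) : ℝ) : ℂ) * Complex.I) := by
      rw [sq, expI_mul]; norm_num; ring_nf
    rw [h1, h2] at hexp2
    have := congrArg (· * Complex.exp (((-(2 * (t * b)) : ℝ) : ℂ) * Complex.I)) hexp2
    simp only [expI_mul] at this
    rw [show (2 * (t * a) + -(2 * (t * b)) : ℝ) = 2 * t * (a - b) by ring,
      show (2 * (t * b) + -(2 * (t * b)) : ℝ) = 0 by ring] at this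
    simpa using this
  refine exp_one_small hone ?_ ?_
  · positivity
  · have h2t : 2 * t ≤ Real.pi / |a - b| := by
      have : min δ (Real.pi / |a - b|) ≤ Real.pi / |a - b| := min_le_right _ _
      rw [ht]; linarith
    have : |2 * t * (a - b)| = 2 * t * |a - b| := by
      rw [abs_mul, abs_of_pos (by positivity : (0:ℝ) < 2 * t)]
    rw [this]
    have := mul_le_mul_of_nonneg_right h2t (le_of_lt habs)
    rw [div_mul_cancel₀ _ (ne_of_gt habs)] at this
    linarith

/-- If two elliptical distributions have equal projections along every line
spanned by a vector of a spanning set, then their location vectors coincide. -/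
theorem loc_eq_of_proj_eq {d : ℕ}
    (P Q : Measure (EuclideanSpace ℝ (Fin d)))
    (μ₁ μ₂ : EuclideanSpace ℝ (Fin d)) (Sig₁ Sig₂ : Matrix (Fin d) (Fin d) ℝ)
    (ψ₁ ψ₂ : ℝ → ℂ)
    (hP : IsElliptical P μ₁ Sig₁ ψ₁) (hQ : IsElliptical Q μ₂ Sig₂ ψ₂)
    (S : Set (EuclideanSpace ℝ (Fin d))) (hspan : Submodule.span ℝ S = ⊤)
    (hproj : ∀ x ∈ S, projLine P x = projLine Q x) :
    μ₁ = μ₂ := by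
  obtain ⟨hPp, hS1, hc1, hcf1⟩ := hP
  obtain ⟨hQp, hS2, hc2, hcf2⟩ := hQ
  -- ψ₁ 0 = 1
  have hcfP0 : cf P 0 = 1 := by
    have : ∀ y : EuclideanSpace ℝ (Fin d),
        Complex.exp (((inner ℝ y (0 : EuclideanSpace ℝ (Fin d)) : ℝ) : ℂ) * Complex.I) = 1 := by
      intro y; simp [inner_zero_right]
    unfold cf
    rw [integral_congr_ae (Filter.Eventually.of_forall this)]
    simp
  have hψ10 : ψ₁ 0 = 1 := by
    have h := hcf1 0
    rw [hcfP0] at h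
    simpa [inner_zero_right, qf_zero] using h.symm
  -- inner products agree on S
  have key : ∀ x ∈ S, (inner ℝ μ₁ x : ℝ) = inner ℝ μ₂ x := by
    intro x hx
    have hmem : ∀ t : ℝ, t • x ∈ Submodule.span ℝ ({x} : Set (EuclideanSpace ℝ (Fin d))) :=
      fun t => Submodule.smul_mem _ t (Submodule.mem_span_singleton_self x)
    have hceq : ∀ t : ℝ,
        Complex.exp (((t * (inner ℝ μ₁ x : ℝ) : ℝ) : ℂ) * Complex.I) * ψ₁ (t ^ 2 * qf Sig₁ x)
          = Complex.exp (((t * (inner ℝ μ₂ x : ℝ) : ℝ) : ℂ) * Complex.I)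
              * ψ₂ (t ^ 2 * qf Sig₂ x) := by
      intro t
      have h3 : cf P (t • x) = cf Q (t • x) :=
        cf_eq_of_proj P Q x (t • x) (hmem t) (hproj x hx)
      rw [hcf1, hcf2] at h3
      rw [qf_smul, qf_smul, real_inner_smul_right, real_inner_smul_right] at h3
      exact h3
    -- nonvanishing of ψ₁ near 0
    have hc₁ : 0 ≤ qf Sig₁ x := qf_nonneg hS1 x
    have htend : Filter.Tendsto (fun t : ℝ => t ^ 2 * qf Sig₁ x) (nhds 0)
        (nhdsWithin 0 (Set.Ici 0)) := by
      apply tendsto_nhdsWithin_of_tendsto_nhds_of_eventually_within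
      · have hcont2 : Continuous (fun t : ℝ => t ^ 2 * qf Sig₁ x) :=
          (continuous_pow 2).mul continuous_const
        have h := hcont2.tendsto (0 : ℝ)
        simpa using h
      · filter_upwards with t
        exact mul_nonneg (sq_nonneg t) hc₁
    have hW : Filter.Tendsto ψ₁ (nhdsWithin 0 (Set.Ici 0)) (nhds (ψ₁ 0)) :=
      hc1 0 Set.self_mem_Ici
    have hcomp : Filter.Tendsto (fun t : ℝ => ψ₁ (t ^ 2 * qf Sig₁ x)) (nhds 0) (nhds 1) := by
      rw [← hψ10]
      exact hW.comp htend
    have hp : ∀ᶠ t in nhds (0 : ℝ), ψ₁ (t ^ 2 * qf Sig₁ x) ≠ 0 :=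
      hcomp.eventually_ne one_ne_zero
    exact scalar_core hceq hp
  -- conclude
  have horto : ∀ y ∈ Submodule.span ℝ S, (inner ℝ (μ₁ - μ₂) y : ℝ) = 0 := by
    intro y hy
    induction hy using Submodule.span_induction with
    | mem z hz => rw [inner_sub_left, key z hz, sub_self]
    | zero => simp
    | add u v _ _ hu hv => rw [inner_add_right, hu, hv, add_zero]
    | smul t u _ hu => rw [real_inner_smul_right, hu, mul_zero]
  have h0 : (inner ℝ (μ₁ - μ₂) (μ₁ - μ₂) : ℝ) = 0 :=
    horto _ (hspan ▸ Submodule.mem_top)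
  have := inner_self_eq_zero.mp h0
  exact sub_eq_zero.mp this
end
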